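/- For the three-dimensional Brauer vaccination model, let S⁰ = (μ+θ)Λ/(μ(μ+φ+θ)) and V⁰ = φΛ/(μ(μ+θ+φ)). Then (S⁰, 0, V⁰) is a steady state (the disease-free equilibrium), and all eigenvalues (complex roots of the characteristic polynomial) of the Jacobian matrix J = [[−(μ+φ), −βS⁰+γ, θ], [0, βS⁰+σβV⁰−(μ+γ), 0], [φ, −σβV⁰, −(μ+θ)]] of the system at this point have negative real parts if and only if βΛ(μ+θ+σφ) < μ(μ+γ)(μ+θ+φ). -/

import Mathlib

open Polynomial Matrix

lemma eval_charpoly' {n : Type*} [DecidableEq n] [Fintype n]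
    (A : Matrix n n ℂ) (z : ℂ) :
    A.charpoly.eval z = (Matrix.scalar n z - A).det := by
  rw [Matrix.charpoly, _root_.eval_det, Matrix.matPolyEquiv_charmatrix]
  congr 1
  ext i j
  simp [Matrix.scalar]

lemma quad_root_neg_re (b c : ℝ) (hb : 0 < b) (hc : 0 < c) (z : ℂ)
    (hz : z ^ 2 + (b : ℂ) * z + (c : ℂ) = 0) : z.re < 0 := by
  by_contra h
  push_neg at h
  set x := z.re
  set y := z.im
  have him : y * (2 * x + b) = 0 := by
    have := congrArg Complex.im hz
    simp [Complex.add_im, Complex.mul_im, pow_two, Complex.mul_re] at this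
    nlinarith [this]
  have hre : x ^ 2 - y ^ 2 + b * x + c = 0 := by
    have := congrArg Complex.re hz
    simp [Complex.add_re, Complex.mul_re, pow_two] at this
    nlinarith [this]
  rcases mul_eq_zero.mp him with hy | hx2
  · nlinarith
  · nlinarith

/-- For the three-dimensional Brauer vaccination model
`S' = Λ − βSI − (μ+φ)S + γI + θV`, `I' = βSI + σβVI − (μ+γ)I`,
`V' = φS − σβVI − (μ+θ)V`, the point `(S⁰, 0, V⁰)` with
`S⁰ = (μ+θ)Λ/(μ(μ+φ+θ))`, `V⁰ = φΛ/(μ(μ+θ+φ))` is a steady state (the DFE),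
and all complex roots of the characteristic polynomial of the Jacobian there
have negative real parts iff `βΛ(μ+θ+σφ) < μ(μ+γ)(μ+θ+φ)`. -/
theorem stmt3 (Λ β μ φ γ θ σ : ℝ) (hΛ : 0 < Λ) (hβ : 0 < β) (hμ : 0 < μ)
    (hφ : 0 < φ) (hγ : 0 < γ) (hθ : 0 < θ) (hσ0 : 0 ≤ σ) (hσ1 : σ ≤ 1)
    (S0 V0 : ℝ) (hS0 : S0 = (μ + θ) * Λ / (μ * (μ + φ + θ)))
    (hV0 : V0 = φ * Λ / (μ * (μ + θ + φ))) :
    (Λ - β * S0 * 0 - (μ + φ) * S0 + γ * 0 + θ * V0 = 0 ∧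
      β * S0 * 0 + σ * β * V0 * 0 - (μ + γ) * 0 = 0 ∧
      φ * S0 - σ * β * V0 * 0 - (μ + θ) * V0 = 0) ∧
    ((∀ z : ℂ,
        ((!![-(μ + φ), -β * S0 + γ, θ;
             0, β * S0 + σ * β * V0 - (μ + γ), 0;
             φ, -σ * β * V0, -(μ + θ)]).map (fun x : ℝ => (x : ℂ))).charpoly.IsRoot z →
        z.re < 0) ↔
      β * Λ * (μ + θ + σ * φ) < μ * (μ + γ) * (μ + θ + φ)) := by
  have hd1 : μ * (μ + φ + θ) ≠ 0 := by positivity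
  have hd2 : μ * (μ + θ + φ) ≠ 0 := by positivity
  constructor
  · refine ⟨?_, by ring, ?_⟩
    · rw [hS0, hV0]; field_simp; ring
    · rw [hS0, hV0]; field_simp; ring
  · set A : ℝ := β * S0 + σ * β * V0 - (μ + γ) with hA
    have hAkey : A * (μ * (μ + θ + φ)) =
        β * Λ * (μ + θ + σ * φ) - μ * (μ + γ) * (μ + θ + φ) := by
      rw [hA, hS0, hV0]; field_simp; ring
    have hfac : ∀ z : ℂ,
        (((!![-(μ + φ), -β * S0 + γ, θ;
             0, β * S0 + σ * β * V0 - (μ + γ), 0;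
             φ, -σ * β * V0, -(μ + θ)]).map (fun x : ℝ => (x : ℂ))).charpoly).eval z =
        (z - (A : ℂ)) * (z ^ 2 + ((2 * μ + φ + θ : ℝ) : ℂ) * z
          + ((μ * (μ + θ + φ) : ℝ) : ℂ)) := by
      intro z
      rw [eval_charpoly', Matrix.det_fin_three]
      simp [Matrix.scalar, hA]
      push_cast
      ring
    constructor
    · intro h
      have hroot : (((!![-(μ + φ), -β * S0 + γ, θ;
             0, β * S0 + σ * β * V0 - (μ + γ), 0;
             φ, -σ * β * V0, -(μ + θ)]).map (fun x : ℝ => (x : ℂ))).charpoly).IsRoot (A : ℂ) := by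
        rw [Polynomial.IsRoot, hfac]
        simp
      have := h _ hroot
      rw [Complex.ofReal_re] at this
      nlinarith [hAkey, mul_pos hμ (by positivity : (0:ℝ) < μ + θ + φ)]
    · intro hineq z hz
      have hAneg : A < 0 := by
        nlinarith [hAkey, mul_pos hμ (by positivity : (0:ℝ) < μ + θ + φ)]
      rw [Polynomial.IsRoot, hfac] at hz
      rcases mul_eq_zero.mp hz with h1 | h2
      · have : z = (A : ℂ) := by linear_combination h1
        rw [this, Complex.ofReal_re]
        exact hAneg
      · exact quad_root_neg_re _ _ (by positivity) (by positivity) z h2
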